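/- Let (Ω, μ) be a probability space, k ≥ 1, U_1, …, U_k finite sets, and for each i ∈ {1,…,k} and x ∈ U_i let E(i,x) be an event. Then μ( ⋂_{i=1}^k ⋃_{x ∈ U_i} E(i,x) ) = ∑ (−1)^{k + |T_1| + … + |T_k|} · μ( ⋂_{i=1}^k ⋂_{x ∈ T_i} E(i,x) ), where the sum ranges over all k-tuples (T_1, …, T_k) with ∅ ≠ T_i ⊆ U_i for every i. -/

import Mathlib

open Finset MeasureTheory

/-- For a probability space `(Ω, μ)`, `k ≥ 1`, finite sets `U_1, …, U_k`
and events `E(i,x)` for `x ∈ U_i`,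
`μ(⋂_{i=1}^k ⋃_{x ∈ U_i} E(i,x)) = ∑ (−1)^{k+|T_1|+…+|T_k|} · μ(⋂_i ⋂_{x ∈ T_i} E(i,x))`,
the sum ranging over all tuples `(T_1,…,T_k)` with `∅ ≠ T_i ⊆ U_i` for every `i`. -/
theorem stmt_13 {Ω : Type*} [MeasurableSpace Ω] (μ : Measure Ω) [IsProbabilityMeasure μ]
    {α : Type*} [DecidableEq α] (k : ℕ) (hk : 1 ≤ k) (U : Fin k → Finset α)
    (E : Fin k → α → Set Ω) (hE : ∀ i x, MeasurableSet (E i x)) :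
    (μ (⋂ i, ⋃ x ∈ U i, E i x)).toReal
    = ∑ T ∈ ((Fintype.piFinset fun i => (U i).powerset).filter
        fun T => ∀ i, (T i).Nonempty),
        (-1 : ℝ) ^ (k + ∑ i, (T i).card) * (μ (⋂ i, ⋂ x ∈ T i, E i x)).toReal := by
  classical
  set S := ((Fintype.piFinset fun i => (U i).powerset).filter
      fun T => ∀ i, (T i).Nonempty) with hS
  have hMeasT : ∀ T : Fin k → Finset α, MeasurableSet (⋂ i, ⋂ x ∈ T i, E i x) := fun T =>
    MeasurableSet.iInter fun i =>
      MeasurableSet.biInter (T i).countable_toSet fun x _ => hE i x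
  have hMeasU : MeasurableSet (⋂ i, ⋃ x ∈ U i, E i x) :=
    MeasurableSet.iInter fun i =>
      MeasurableSet.biUnion (U i).countable_toSet fun x _ => hE i x
  -- `S` equals a piFinset
  have hSet : S = Fintype.piFinset (fun i => (U i).powerset.filter Finset.Nonempty) := by
    ext T
    simp only [hS, Finset.mem_filter, Fintype.mem_piFinset, forall_and]
  -- the pointwise inclusion-exclusion identity for indicator functions
  have key : ∀ ω : Ω, Set.indicator (⋂ i, ⋃ x ∈ U i, E i x) (1 : Ω → ℝ) ω
      = ∑ T ∈ S, (-1 : ℝ) ^ (k + ∑ i, (T i).card) *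
          Set.indicator (⋂ i, ⋂ x ∈ T i, E i x) (1 : Ω → ℝ) ω := by
    intro ω
    set a : Fin k → α → ℝ := fun i x => if ω ∈ E i x then 1 else 0 with ha
    -- indicator of big intersection of unions as a product
    have h1 : Set.indicator (⋂ i, ⋃ x ∈ U i, E i x) (1 : Ω → ℝ) ω
        = ∏ i, (if ω ∈ ⋃ x ∈ U i, E i x then (1:ℝ) else 0) := by
      rw [Set.indicator_apply]
      by_cases h : ω ∈ ⋂ i, ⋃ x ∈ U i, E i x
      · rw [if_pos h]
        exact (Finset.prod_eq_one fun i _ => if_pos (Set.mem_iInter.mp h i)).symm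
      · rw [if_neg h]
        obtain ⟨i, hi⟩ : ∃ i, ω ∉ ⋃ x ∈ U i, E i x := by
          simpa [Set.mem_iInter] using h
        symm
        apply Finset.prod_eq_zero (Finset.mem_univ i)
        rw [if_neg hi]
    -- each union-factor as a signed sum over nonempty subsets
    have h2 : ∀ i : Fin k, (if ω ∈ ⋃ x ∈ U i, E i x then (1:ℝ) else 0)
        = ∑ T ∈ (U i).powerset.filter Finset.Nonempty,
            (-1 : ℝ) ^ (T.card + 1) * ∏ x ∈ T, a i x := by
      intro i
      have hprod : ∏ x ∈ U i, (1 - a i x)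
          = ∑ T ∈ (U i).powerset, (-1 : ℝ) ^ T.card * ∏ x ∈ T, a i x := by
        have hneg1 : ∀ T : Finset α, ∏ x ∈ T, (-a i x) = (-1:ℝ) ^ T.card * ∏ x ∈ T, a i x := by
          intro T
          rw [Finset.prod_congr rfl fun x _ => (neg_one_mul (a i x)).symm,
            Finset.prod_mul_distrib, Finset.prod_const]
        have h := Finset.prod_add (fun x => -a i x) (fun _ => (1:ℝ)) (U i)
        have h' : ∀ x : α, -a i x + 1 = 1 - a i x := fun x => by ring
        simp only [h', Finset.prod_const_one, mul_one, hneg1] at h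
        exact h
      have hval : ∏ x ∈ U i, (1 - a i x)
          = if ω ∈ ⋃ x ∈ U i, E i x then (0:ℝ) else 1 := by
        by_cases h : ω ∈ ⋃ x ∈ U i, E i x
        · rw [if_pos h]
          obtain ⟨x, hxU, hx⟩ : ∃ x ∈ U i, ω ∈ E i x := by simpa using h
          exact Finset.prod_eq_zero hxU (by simp [ha, hx])
        · rw [if_neg h]
          refine Finset.prod_eq_one fun x hx => ?_
          have hnx : ω ∉ E i x := fun hmem => h (Set.mem_biUnion hx hmem)
          simp [ha, hnx]
      have hsplit : ∑ T ∈ (U i).powerset, (-1 : ℝ) ^ T.card * ∏ x ∈ T, a i x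
          = (∑ T ∈ (U i).powerset.filter Finset.Nonempty,
              (-1 : ℝ) ^ T.card * ∏ x ∈ T, a i x) + 1 := by
        rw [← Finset.sum_filter_add_sum_filter_not (U i).powerset Finset.Nonempty]
        congr 1
        have he : (U i).powerset.filter (fun T => ¬ T.Nonempty) = {∅} := by
          ext T
          simp only [Finset.mem_filter, Finset.mem_powerset,
            Finset.not_nonempty_iff_eq_empty, Finset.mem_singleton]
          constructor
          · rintro ⟨-, h⟩; exact h
          · rintro rfl; exact ⟨Finset.empty_subset _, rfl⟩
        rw [he]
        simp
      have hx : (if ω ∈ ⋃ x ∈ U i, E i x then (0:ℝ) else 1)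
          = (∑ T ∈ (U i).powerset.filter Finset.Nonempty,
              (-1 : ℝ) ^ T.card * ∏ x ∈ T, a i x) + 1 := by
        rw [← hval, hprod, hsplit]
      have hneg : ∑ T ∈ (U i).powerset.filter Finset.Nonempty,
            (-1 : ℝ) ^ (T.card + 1) * ∏ x ∈ T, a i x
          = -∑ T ∈ (U i).powerset.filter Finset.Nonempty,
              (-1 : ℝ) ^ T.card * ∏ x ∈ T, a i x := by
        rw [← Finset.sum_neg_distrib]
        exact Finset.sum_congr rfl fun T _ => by rw [pow_succ]; ring
      rw [hneg]
      by_cases h : ω ∈ ⋃ x ∈ U i, E i x <;> simp only [h, if_true, if_false] at hx ⊢ <;>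
        linarith
    -- each single-tuple term
    have h3 : ∀ T ∈ Fintype.piFinset (fun i => (U i).powerset.filter Finset.Nonempty),
        ∏ i, ((-1 : ℝ) ^ ((T i).card + 1) * ∏ x ∈ T i, a i x)
        = (-1 : ℝ) ^ (k + ∑ i, (T i).card) *
            Set.indicator (⋂ i, ⋂ x ∈ T i, E i x) (1 : Ω → ℝ) ω := by
      intro T _
      rw [Finset.prod_mul_distrib, Finset.prod_pow_eq_pow_sum]
      congr 1
      · congr 1
        rw [Finset.sum_add_distrib]
        simp [add_comm]
      · rw [Set.indicator_apply]
        by_cases h : ω ∈ ⋂ i, ⋂ x ∈ T i, E i x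
        · rw [if_pos h]
          refine Finset.prod_eq_one fun i _ => Finset.prod_eq_one fun x hx => ?_
          have : ω ∈ E i x := by
            have := Set.mem_iInter.mp h i
            exact Set.mem_iInter₂.mp this x hx
          simp [ha, this]
        · rw [if_neg h]
          obtain ⟨i, x, hxT, hnx⟩ : ∃ i, ∃ x ∈ T i, ω ∉ E i x := by
            simpa [Set.mem_iInter] using h
          refine Finset.prod_eq_zero (mem_univ i) ?_
          refine Finset.prod_eq_zero hxT ?_
          simp [ha, hnx]
    rw [h1, Finset.prod_congr rfl fun i _ => h2 i, Finset.prod_univ_sum, hSet]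
    exact Finset.sum_congr rfl h3
  -- integrate the pointwise identity
  have hInt : ∀ T ∈ S, Integrable (fun ω => (-1 : ℝ) ^ (k + ∑ i, (T i).card) *
      Set.indicator (⋂ i, ⋂ x ∈ T i, E i x) (1 : Ω → ℝ) ω) μ := by
    intro T _
    exact ((integrable_indicator_iff (hMeasT T)).2
      (integrableOn_const (measure_ne_top μ _))).const_mul _
  have hfe : (fun ω => Set.indicator (⋂ i, ⋃ x ∈ U i, E i x) (1 : Ω → ℝ) ω)
      = fun ω => ∑ T ∈ S, (-1 : ℝ) ^ (k + ∑ i, (T i).card) *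
          Set.indicator (⋂ i, ⋂ x ∈ T i, E i x) (1 : Ω → ℝ) ω := funext key
  calc (μ (⋂ i, ⋃ x ∈ U i, E i x)).toReal
      = ∫ ω, Set.indicator (⋂ i, ⋃ x ∈ U i, E i x) (1 : Ω → ℝ) ω ∂μ :=
        (integral_indicator_one hMeasU).symm
    _ = ∑ T ∈ S, ∫ ω, (-1 : ℝ) ^ (k + ∑ i, (T i).card) *
          Set.indicator (⋂ i, ⋂ x ∈ T i, E i x) (1 : Ω → ℝ) ω ∂μ := by
        rw [hfe, integral_finset_sum S hInt]
    _ = ∑ T ∈ S, (-1 : ℝ) ^ (k + ∑ i, (T i).card) *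
          (μ (⋂ i, ⋂ x ∈ T i, E i x)).toReal := by
        refine Finset.sum_congr rfl fun T _ => ?_
        rw [MeasureTheory.integral_const_mul, integral_indicator_one (hMeasT T)]
        rfl
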